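/- Let A be a formally real integral domain which is an ℝ-algebra. Let I₀, M₀ be imaginary units whose vector parts are orthogonal in ℝ³, let h = h₀ + h₁·ι(M₀) with h₀, h₁ ∈ A, h₁ ≠ 0, and let g ∈ Quaternion A; write g uniquely as g = g₀ + g₁·ι(I₀) + g₂·ι(M₀) + g₃·ι(I₀M₀) with g₀, g₁, g₂, g₃ ∈ A (possible since 1, I₀, M₀, I₀M₀ is an ℝ-basis of Quaternion ℝ). Then there exists an I₀-sliced f ∈ Quaternion A with h * f * star h = g if and only if g₂ = 0, (h₀² + h₁²) divides g₀ in A, (h₀² − h₁²) divides g₁ in A, h₀·h₁ divides g₃ in A, and 2h₀h₁g₁ + (h₀² − h₁²)g₃ = 0. (Proposition 5.11, case (iii).) -/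

import Mathlib

open Quaternion

/-- The componentwise extension `ι : ℍ[ℝ] → ℍ[A]` of `algebraMap ℝ A`. -/
noncomputable def qmap {A : Type*} [CommRing A] [Algebra ℝ A] (q : Quaternion ℝ) :
    Quaternion A :=
  ⟨algebraMap ℝ A q.re, algebraMap ℝ A q.imI, algebraMap ℝ A q.imJ, algebraMap ℝ A q.imK⟩

/-- An imaginary unit: a real quaternion with zero real part squaring to `-1`. -/
def IsImaginaryUnit (I : Quaternion ℝ) : Prop := I.re = 0 ∧ I ^ 2 = -1

/-- `q` is `I`-sliced if `q = a + b·ι(I)` for some `a, b ∈ A`. -/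
noncomputable def IsSliced {A : Type*} [CommRing A] [Algebra ℝ A]
    (I : Quaternion ℝ) (q : Quaternion A) : Prop :=
  ∃ a b : A, q = (a : Quaternion A) + (b : Quaternion A) * qmap I

/-- The vector parts of `I` and `M` are orthogonal in `ℝ³`. -/
def OrthIm (I M : Quaternion ℝ) : Prop :=
  I.imI * M.imI + I.imJ * M.imJ + I.imK * M.imK = 0

/-- `A` is formally real: a sum of four squares vanishes only trivially. -/
def FormallyRealFour (A : Type*) [CommRing A] : Prop :=
  ∀ a b c d : A, a ^ 2 + b ^ 2 + c ^ 2 + d ^ 2 = 0 → a = 0 ∧ b = 0 ∧ c = 0 ∧ d = 0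

@[simp] lemma qmap_re {A : Type*} [CommRing A] [Algebra ℝ A] (q : Quaternion ℝ) :
    (qmap q : Quaternion A).re = algebraMap ℝ A q.re := rfl

@[simp] lemma qmap_imI {A : Type*} [CommRing A] [Algebra ℝ A] (q : Quaternion ℝ) :
    (qmap q : Quaternion A).imI = algebraMap ℝ A q.imI := rfl

@[simp] lemma qmap_imJ {A : Type*} [CommRing A] [Algebra ℝ A] (q : Quaternion ℝ) :
    (qmap q : Quaternion A).imJ = algebraMap ℝ A q.imJ := rfl

@[simp] lemma qmap_imK {A : Type*} [CommRing A] [Algebra ℝ A] (q : Quaternion ℝ) :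
    (qmap q : Quaternion A).imK = algebraMap ℝ A q.imK := rfl

lemma imaginary_norm' {I : Quaternion ℝ} (h : IsImaginaryUnit I) :
    I.imI^2 + I.imJ^2 + I.imK^2 = 1 := by
  have h2 := congrArg QuaternionAlgebra.re h.2
  simp [pow_two, Quaternion.re_mul, h.1] at h2
  linear_combination -h2

lemma conj_formula' {A : Type*} [CommRing A] [Algebra ℝ A]
    (I₀ M₀ : Quaternion ℝ) (hI₀ : IsImaginaryUnit I₀) (hM₀ : IsImaginaryUnit M₀)
    (horth : OrthIm I₀ M₀) (h₀ h₁ a b : A) :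
    ((h₀ : Quaternion A) + (h₁ : Quaternion A) * qmap M₀) *
      ((a : Quaternion A) + (b : Quaternion A) * qmap I₀) *
      star ((h₀ : Quaternion A) + (h₁ : Quaternion A) * qmap M₀)
    = ((a*(h₀^2+h₁^2) : A) : Quaternion A)
      + ((b*(h₀^2-h₁^2) : A) : Quaternion A) * qmap I₀
      + ((-(2*b*h₀*h₁) : A) : Quaternion A) * qmap (I₀*M₀) := by
  have hN : (algebraMap ℝ A M₀.imI)^2 + (algebraMap ℝ A M₀.imJ)^2
      + (algebraMap ℝ A M₀.imK)^2 = 1 := by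
    have := congrArg (algebraMap ℝ A) (imaginary_norm' hM₀)
    simpa [map_add, map_pow] using this
  have hD : (algebraMap ℝ A I₀.imI) * (algebraMap ℝ A M₀.imI)
      + (algebraMap ℝ A I₀.imJ) * (algebraMap ℝ A M₀.imJ)
      + (algebraMap ℝ A I₀.imK) * (algebraMap ℝ A M₀.imK) = 0 := by
    have := congrArg (algebraMap ℝ A) horth
    simpa [map_add, map_mul] using this
  ext <;>
    simp only [qmap_re, qmap_imI, qmap_imJ, qmap_imK, Quaternion.re_mul, Quaternion.imI_mul, Quaternion.imJ_mul,
      Quaternion.imK_mul, Quaternion.re_add, Quaternion.imI_add, Quaternion.imJ_add,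
      Quaternion.imK_add, Quaternion.re_star, Quaternion.imI_star, Quaternion.imJ_star,
      Quaternion.imK_star, Quaternion.re_coe, Quaternion.imI_coe, Quaternion.imJ_coe,
      Quaternion.imK_coe, hI₀.1, hM₀.1, map_zero, map_mul, map_add, map_sub, map_neg]
  · linear_combination (a*h₁^2) * hN + (-(2*b*h₀*h₁)) * hD
  · linear_combination (-(b*h₁^2*(algebraMap ℝ A I₀.imI))) * hN
      + (2*b*h₁^2*(algebraMap ℝ A M₀.imI)) * hD
  · linear_combination (-(b*h₁^2*(algebraMap ℝ A I₀.imJ))) * hN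
      + (2*b*h₁^2*(algebraMap ℝ A M₀.imJ)) * hD
  · linear_combination (-(b*h₁^2*(algebraMap ℝ A I₀.imK))) * hN
      + (2*b*h₁^2*(algebraMap ℝ A M₀.imK)) * hD

lemma indep' {A : Type*} [CommRing A] [Algebra ℝ A]
    (I₀ M₀ : Quaternion ℝ) (hI₀ : IsImaginaryUnit I₀) (hM₀ : IsImaginaryUnit M₀)
    (horth : OrthIm I₀ M₀) (a b c d a' b' c' d' : A)
    (hq : (a : Quaternion A) + (b : Quaternion A) * qmap I₀ + (c : Quaternion A) * qmap M₀
        + (d : Quaternion A) * qmap (I₀ * M₀)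
      = (a' : Quaternion A) + (b' : Quaternion A) * qmap I₀ + (c' : Quaternion A) * qmap M₀
        + (d' : Quaternion A) * qmap (I₀ * M₀)) :
    a = a' ∧ b = b' ∧ c = c' ∧ d = d' := by
  set e1 := algebraMap ℝ A I₀.imI with he1
  set e2 := algebraMap ℝ A I₀.imJ with he2
  set e3 := algebraMap ℝ A I₀.imK with he3
  set n1 := algebraMap ℝ A M₀.imI with hn1
  set n2 := algebraMap ℝ A M₀.imJ with hn2
  set n3 := algebraMap ℝ A M₀.imK with hn3
  have hE : e1^2 + e2^2 + e3^2 = 1 := by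
    have := congrArg (algebraMap ℝ A) (imaginary_norm' hI₀)
    simpa [map_add, map_pow, he1, he2, he3] using this
  have hN : n1^2 + n2^2 + n3^2 = 1 := by
    have := congrArg (algebraMap ℝ A) (imaginary_norm' hM₀)
    simpa [map_add, map_pow, hn1, hn2, hn3] using this
  have hD : e1*n1 + e2*n2 + e3*n3 = 0 := by
    have := congrArg (algebraMap ℝ A) horth
    simpa [map_add, map_mul, he1, he2, he3, hn1, hn2, hn3] using this
  have hre := congrArg QuaternionAlgebra.re hq
  have hi := congrArg QuaternionAlgebra.imI hq
  have hj := congrArg QuaternionAlgebra.imJ hq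
  have hk := congrArg QuaternionAlgebra.imK hq
  simp only [qmap_re, qmap_imI, qmap_imJ, qmap_imK, Quaternion.re_mul, Quaternion.imI_mul, Quaternion.imJ_mul,
    Quaternion.imK_mul, Quaternion.re_add, Quaternion.imI_add, Quaternion.imJ_add,
    Quaternion.imK_add, Quaternion.re_coe, Quaternion.imI_coe, Quaternion.imJ_coe,
    Quaternion.imK_coe, hI₀.1, hM₀.1, map_zero, map_mul, map_add, map_sub, map_neg,
    ← he1, ← he2, ← he3, ← hn1, ← hn2, ← hn3] at hre hi hj hk
  refine ⟨?_, ?_, ?_, ?_⟩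
  · linear_combination hre + (d - d') * hD
  · linear_combination e1*hi + e2*hj + e3*hk - (b-b')*hE - (c-c')*hD
  · linear_combination n1*hi + n2*hj + n3*hk - (c-c')*hN - (b-b')*hD
  · linear_combination (e2*n3-e3*n2)*hi + (e3*n1-e1*n3)*hj + (e1*n2-e2*n1)*hk
      - (d-d')*(n1^2+n2^2+n3^2)*hE - (d-d')*hN + (d-d')*(e1*n1+e2*n2+e3*n3)*hD

theorem exists_sliced_conjugated_eq_case_orthogonal
    {A : Type*} [CommRing A] [IsDomain A] [Algebra ℝ A] (hFR : FormallyRealFour A)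
    (I₀ M₀ : Quaternion ℝ) (hI₀ : IsImaginaryUnit I₀) (hM₀ : IsImaginaryUnit M₀)
    (horth : OrthIm I₀ M₀)
    (h₀ h₁ : A) (hh₁ : h₁ ≠ 0) (h : Quaternion A)
    (hh : h = (h₀ : Quaternion A) + (h₁ : Quaternion A) * qmap M₀)
    (g : Quaternion A) (g₀ g₁ g₂ g₃ : A)
    (hg : g = (g₀ : Quaternion A) + (g₁ : Quaternion A) * qmap I₀
        + (g₂ : Quaternion A) * qmap M₀ + (g₃ : Quaternion A) * qmap (I₀ * M₀)) :
    (∃ f : Quaternion A, IsSliced I₀ f ∧ h * f * star h = g) ↔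
      g₂ = 0 ∧ (h₀ ^ 2 + h₁ ^ 2) ∣ g₀ ∧ (h₀ ^ 2 - h₁ ^ 2) ∣ g₁ ∧ (h₀ * h₁) ∣ g₃ ∧
        2 * h₀ * h₁ * g₁ + (h₀ ^ 2 - h₁ ^ 2) * g₃ = 0 := by
  constructor
  · rintro ⟨f, ⟨a, b, hf⟩, hcj⟩
    rw [hf, hh, conj_formula' I₀ M₀ hI₀ hM₀ horth] at hcj
    have h4 : ((a*(h₀^2+h₁^2) : A) : Quaternion A)
        + ((b*(h₀^2-h₁^2) : A) : Quaternion A) * qmap I₀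
        + ((0 : A) : Quaternion A) * qmap M₀
        + ((-(2*b*h₀*h₁) : A) : Quaternion A) * qmap (I₀*M₀)
        = (g₀ : Quaternion A) + (g₁ : Quaternion A) * qmap I₀
          + (g₂ : Quaternion A) * qmap M₀ + (g₃ : Quaternion A) * qmap (I₀ * M₀) := by
      rw [← hg, ← hcj]
      simp only [Quaternion.coe_zero, zero_mul, add_zero]
    obtain ⟨ea, eb, ec, ed⟩ := indep' I₀ M₀ hI₀ hM₀ horth _ _ _ _ _ _ _ _ h4
    refine ⟨ec.symm, ⟨a, by linear_combination -ea⟩, ⟨b, by linear_combination -eb⟩,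
      ⟨-(2*b), by linear_combination -ed⟩, by linear_combination (-(2*h₀*h₁))*eb - (h₀^2-h₁^2)*ed⟩
  · rintro ⟨hg₂, ⟨a, ha⟩, ⟨b₁, hb₁⟩, ⟨c, hc⟩, hrel⟩
    by_cases hcase : h₀^2 - h₁^2 = 0
    · -- degenerate case: h₀² = h₁²; choose b = (-1/2) • c
      set b : A := (-(1/2 : ℝ)) • c with hb
      have h2b : (2:A) * b = -c := by
        rw [hb, mul_smul_comm, show (2:A)*c = (2:ℝ)•c from by rw [two_mul, two_smul],
          smul_smul]
        norm_num
      refine ⟨(a : Quaternion A) + (b : Quaternion A) * qmap I₀, ⟨a, b, rfl⟩, ?_⟩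
      rw [hh, conj_formula' I₀ M₀ hI₀ hM₀ horth, hg, hg₂]
      have ea : a*(h₀^2+h₁^2) = g₀ := by rw [ha]; ring
      have eb : b*(h₀^2-h₁^2) = g₁ := by rw [hcase, hb₁, hcase]; ring
      have ed : -(2*b*h₀*h₁) = g₃ := by linear_combination (-(h₀*h₁))*h2b - hc
      rw [ea, eb, ed]
      simp only [Quaternion.coe_zero, zero_mul, add_zero]
    · -- nondegenerate case: use b₁
      have hfac : (h₀^2-h₁^2) * (2*h₀*h₁*b₁ + g₃) = 0 := by
        linear_combination hrel - (2*h₀*h₁)*hb₁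
      have hg3 : 2*h₀*h₁*b₁ + g₃ = 0 := (mul_eq_zero.mp hfac).resolve_left hcase
      refine ⟨(a : Quaternion A) + (b₁ : Quaternion A) * qmap I₀, ⟨a, b₁, rfl⟩, ?_⟩
      rw [hh, conj_formula' I₀ M₀ hI₀ hM₀ horth, hg, hg₂]
      have ea : a*(h₀^2+h₁^2) = g₀ := by rw [ha]; ring
      have eb : b₁*(h₀^2-h₁^2) = g₁ := by rw [hb₁]; ring
      have ed : -(2*b₁*h₀*h₁) = g₃ := by linear_combination -hg3
      rw [ea, eb, ed]
      simp only [Quaternion.coe_zero, zero_mul, add_zero]
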